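/- For all a, b > 0 and 0 < ν < 1, one has 2√(ab) ≤ (a+b) · ((a^ν b^{1-ν} + a^{1-ν} b^ν)/(a+b))^{1/(4ν(1-ν))} ≤ a^ν b^{1-ν} + a^{1-ν} b^ν. -/

import Mathlib

open Real

lemma lemA {x : ℝ} (hx : 0 ≤ x) : x ≤ Real.sinh x * Real.cosh x := by
  rcases eq_or_lt_of_le hx with h0 | h0
  · simp [← h0]
  · have h : 2 * x < Real.sinh (2 * x) := Real.self_lt_sinh_iff.2 (by linarith)
    rw [Real.sinh_two_mul] at h; linarith

lemma lemB {x : ℝ} (hx : 0 ≤ x) :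
    x * (Real.sinh x / Real.cosh x) ≤ 2 * Real.log (Real.cosh x) := by
  set ψ : ℝ → ℝ := fun y => 2 * Real.log (Real.cosh y) - y * (Real.sinh y / Real.cosh y) with hψ
  set ψ' : ℝ → ℝ := fun y => (Real.sinh y * Real.cosh y - y) / (Real.cosh y) ^ 2 with hψ'
  have hder : ∀ y : ℝ, HasDerivAt ψ (ψ' y) y := by
    intro y
    have hc := Real.cosh_pos y
    have h1 : HasDerivAt (fun z => Real.log (Real.cosh z)) (Real.sinh y / Real.cosh y) y :=
      (Real.hasDerivAt_cosh y).log hc.ne'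
    have h2 : HasDerivAt (fun z => Real.sinh z / Real.cosh z)
        ((Real.cosh y * Real.cosh y - Real.sinh y * Real.sinh y) / (Real.cosh y) ^ 2) y :=
      (Real.hasDerivAt_sinh y).div (Real.hasDerivAt_cosh y) hc.ne'
    have h3 : HasDerivAt (fun z => z * (Real.sinh z / Real.cosh z))
        (1 * (Real.sinh y / Real.cosh y) +
          y * ((Real.cosh y * Real.cosh y - Real.sinh y * Real.sinh y) / (Real.cosh y) ^ 2)) y :=
      (hasDerivAt_id y).mul h2
    have h4 := (h1.const_mul 2).sub h3
    refine HasDerivAt.congr_deriv h4 ?_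
    have hsq : Real.cosh y ^ 2 - Real.sinh y ^ 2 = 1 := Real.cosh_sq_sub_sinh_sq y
    have hcc : Real.cosh y * Real.cosh y - Real.sinh y * Real.sinh y = 1 := by
      rw [← pow_two, ← pow_two]; exact hsq
    rw [hψ', hcc]
    field_simp
    ring
  have hmono : MonotoneOn ψ (Set.Ici (0:ℝ)) := by
    apply monotoneOn_of_hasDerivWithinAt_nonneg (convex_Ici 0)
      (fun y _ => (hder y).continuousAt.continuousWithinAt)
      (fun y hy => (hder y).hasDerivWithinAt)
    intro y hy
    rw [interior_Ici] at hy
    have hy0 : (0:ℝ) ≤ y := le_of_lt hy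
    have := lemA hy0
    have hc := Real.cosh_pos y
    apply div_nonneg (by linarith) (by positivity)
  have h0 : ψ 0 ≤ ψ x := hmono Set.self_mem_Ici (Set.mem_Ici.2 hx) hx
  simp [hψ] at h0
  linarith

lemma lemC {s t : ℝ} (hs : 0 < s) (hst : s ≤ t) :
    s ^ 2 * Real.log (Real.cosh t) ≤ t ^ 2 * Real.log (Real.cosh s) := by
  set φ : ℝ → ℝ := fun y => Real.log (Real.cosh y) / y ^ 2 with hφ
  set φ' : ℝ → ℝ := fun y =>
    (y * (Real.sinh y / Real.cosh y) - 2 * Real.log (Real.cosh y)) / y ^ 3 with hφ'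
  have hder : ∀ y : ℝ, 0 < y → HasDerivAt φ (φ' y) y := by
    intro y hy
    have hc := Real.cosh_pos y
    have h1 : HasDerivAt (fun z => Real.log (Real.cosh z)) (Real.sinh y / Real.cosh y) y :=
      (Real.hasDerivAt_cosh y).log hc.ne'
    have h2 : HasDerivAt (fun z : ℝ => z ^ 2) (2 * y) y := by
      simpa using hasDerivAt_pow 2 y
    have h3 := h1.div h2 (by positivity)
    refine HasDerivAt.congr_deriv h3 ?_
    simp only [hφ']
    field_simp
  have hanti : AntitoneOn φ (Set.Ioi (0:ℝ)) := by
    apply antitoneOn_of_hasDerivWithinAt_nonpos (convex_Ioi 0)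
      (fun y hy => (hder y hy).continuousAt.continuousWithinAt)
      (fun y hy => (hder y (by simpa [interior_Ioi] using hy)).hasDerivWithinAt)
    intro y hy
    rw [interior_Ioi] at hy
    have hy' : (0:ℝ) < y := hy
    have h := lemB (le_of_lt hy')
    apply div_nonpos_of_nonpos_of_nonneg (by linarith) (by positivity)
  have h := hanti (Set.mem_Ioi.2 hs) (Set.mem_Ioi.2 (lt_of_lt_of_le hs hst)) hst
  have ht : 0 < t := lt_of_lt_of_le hs hst
  rw [hφ] at h
  simp only [div_le_div_iff₀ (by positivity : (0:ℝ) < t^2) (by positivity : (0:ℝ) < s^2)] at h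
  linarith

lemma keyPos {t μ : ℝ} (ht : 0 ≤ t) (hμ0 : 0 ≤ μ) (hμ1 : μ ≤ 1) :
    Real.cosh t ^ (μ ^ 2) ≤ Real.cosh (μ * t) := by
  rcases eq_or_lt_of_le ht with h0 | h0
  · simp [← h0]
  rcases eq_or_lt_of_le hμ0 with h1 | h1
  · simp [← h1, Real.one_le_cosh]
  have hst : μ * t ≤ t := by nlinarith
  have hs : 0 < μ * t := by positivity
  have h := lemC hs hst
  have hμt : (μ * t) ^ 2 = μ ^ 2 * t ^ 2 := by ring
  rw [hμt] at h
  have ht2 : (0:ℝ) < t ^ 2 := by positivity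
  have h2 : μ ^ 2 * Real.log (Real.cosh t) ≤ Real.log (Real.cosh (μ * t)) := by
    nlinarith
  have hc := Real.cosh_pos t
  rw [Real.rpow_def_of_pos hc]
  calc Real.exp (Real.log (Real.cosh t) * μ ^ 2) ≤ Real.exp (Real.log (Real.cosh (μ * t))) := by
        apply Real.exp_le_exp.2; linarith
    _ = Real.cosh (μ * t) := Real.exp_log (Real.cosh_pos _)

lemma key (t μ : ℝ) (hμ : |μ| ≤ 1) :
    Real.cosh t ^ (μ ^ 2) ≤ Real.cosh (μ * t) := by
  have h := keyPos (abs_nonneg t) (abs_nonneg μ) hμ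
  rw [Real.cosh_abs, ← abs_mul, Real.cosh_abs, sq_abs] at h
  exact h

theorem geometric_heinz_refinement (a b ν : ℝ) (ha : 0 < a) (hb : 0 < b)
    (hν0 : 0 < ν) (hν1 : ν < 1) :
    2 * Real.sqrt (a * b) ≤
      (a + b) * ((a ^ ν * b ^ (1 - ν) + a ^ (1 - ν) * b ^ ν) / (a + b)) ^ (1 / (4 * ν * (1 - ν)))
    ∧ (a + b) * ((a ^ ν * b ^ (1 - ν) + a ^ (1 - ν) * b ^ ν) / (a + b)) ^ (1 / (4 * ν * (1 - ν)))
        ≤ a ^ ν * b ^ (1 - ν) + a ^ (1 - ν) * b ^ ν := by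
  set s : ℝ := Real.sqrt (a * b) with hsdef
  have hs : 0 < s := Real.sqrt_pos.2 (by positivity)
  set t : ℝ := (Real.log a - Real.log b) / 2 with htdef
  set μ : ℝ := 2 * ν - 1 with hμdef
  have hμabs : |μ| ≤ 1 := by rw [abs_le]; constructor <;> [linarith; linarith]
  have hμlt : |μ| < 1 := by rw [abs_lt]; constructor <;> [linarith; linarith]
  -- s as exp
  have hsexp : s = Real.exp ((Real.log a + Real.log b) / 2) := by
    have hab : a * b = Real.exp ((Real.log a + Real.log b) / 2) ^ 2 := by
      rw [sq, ← Real.exp_add,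
        show (Real.log a + Real.log b) / 2 + (Real.log a + Real.log b) / 2
            = Real.log a + Real.log b by ring,
        Real.exp_add, Real.exp_log ha, Real.exp_log hb]
    rw [hsdef, hab, Real.sqrt_sq (Real.exp_pos _).le]
  have ha' : a = s * Real.exp t := by
    rw [hsexp, ← Real.exp_add]
    rw [show (Real.log a + Real.log b) / 2 + t = Real.log a by rw [htdef]; ring]
    exact (Real.exp_log ha).symm
  have hb' : b = s * Real.exp (-t) := by
    rw [hsexp, ← Real.exp_add]
    rw [show (Real.log a + Real.log b) / 2 + -t = Real.log b by rw [htdef]; ring]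
    exact (Real.exp_log hb).symm
  have hS : a + b = s * (2 * Real.cosh t) := by
    rw [ha', hb', Real.cosh_eq]; ring
  have h1 : a ^ ν * b ^ (1 - ν) = s * Real.exp (μ * t) := by
    rw [Real.rpow_def_of_pos ha, Real.rpow_def_of_pos hb, ← Real.exp_add, hsexp, ← Real.exp_add]
    congr 1
    rw [hμdef, htdef]; ring
  have h2 : a ^ (1 - ν) * b ^ ν = s * Real.exp (-(μ * t)) := by
    rw [Real.rpow_def_of_pos ha, Real.rpow_def_of_pos hb, ← Real.exp_add, hsexp, ← Real.exp_add]
    congr 1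
    rw [hμdef, htdef]; ring
  have hH : a ^ ν * b ^ (1 - ν) + a ^ (1 - ν) * b ^ ν = s * (2 * Real.cosh (μ * t)) := by
    rw [h1, h2, Real.cosh_eq]; ring
  set c : ℝ := Real.cosh t with hcdef
  set d : ℝ := Real.cosh (μ * t) with hddef
  have hc1 : 1 ≤ c := Real.one_le_cosh t
  have hc : 0 < c := by linarith
  have hd : 0 < d := Real.cosh_pos _
  have hdc : d ≤ c := by
    rw [hcdef, hddef, Real.cosh_le_cosh, abs_mul]
    calc |μ| * |t| ≤ 1 * |t| := by
          apply mul_le_mul_of_nonneg_right hμabs (abs_nonneg t)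
      _ = |t| := one_mul _
  set θ : ℝ := 4 * ν * (1 - ν) with hθdef
  have hθ0 : 0 < θ := by nlinarith
  have hθμ : 1 - θ = μ ^ 2 := by rw [hθdef, hμdef]; ring
  have hθ1 : θ ≤ 1 := by nlinarith [sq_nonneg μ]
  set p : ℝ := 1 / θ with hpdef
  have hp1 : 1 ≤ p := by
    rw [hpdef]
    rw [le_div_iff₀ hθ0]; linarith
  have hkey : c ^ ((1:ℝ) - θ) ≤ d := by rw [hθμ]; exact key t μ hμabs
  have hdiv : (a ^ ν * b ^ (1 - ν) + a ^ (1 - ν) * b ^ ν) / (a + b) = d / c := by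
    rw [hH, hS, mul_div_mul_left _ _ hs.ne', mul_div_mul_left _ _ (two_ne_zero)]
  rw [hdiv, hH, hS]
  have hdc0 : 0 < d / c := by positivity
  have hdc1 : d / c ≤ 1 := by rw [div_le_one hc]; exact hdc
  constructor
  · -- 2 * s ≤ s * (2*c) * (d/c)^p
    have hG : 2 * s = s * (2 * c) * (1 / c) := by field_simp
    rw [hG]
    apply mul_le_mul_of_nonneg_left _ (by positivity)
    -- 1/c ≤ (d/c)^p
    have e1 : (1 / c : ℝ) = ((1 / c) ^ θ) ^ p := by
      rw [← Real.rpow_mul (by positivity),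
        show θ * p = 1 by rw [hpdef]; field_simp, Real.rpow_one]
    have hstep : (1 / c : ℝ) ^ θ ≤ d / c := by
      have h1 : (1 / c : ℝ) ^ θ = c ^ (-θ) := by
        rw [one_div, Real.inv_rpow hc.le, ← Real.rpow_neg hc.le]
      have h2 : c ^ ((1:ℝ) - θ) = c ^ (-θ) * c := by
        rw [← Real.rpow_add_one hc.ne' (-θ)]; congr 1; ring
      rw [h1, le_div_iff₀ hc, ← h2]
      exact hkey
    calc (1 / c : ℝ) = ((1 / c) ^ θ) ^ p := e1
      _ ≤ (d / c) ^ p := Real.rpow_le_rpow (by positivity) hstep (by positivity)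
  · have hrw : s * (2 * d) = s * (2 * c) * (d / c) := by field_simp
    rw [hrw]
    apply mul_le_mul_of_nonneg_left _ (by positivity)
    calc (d / c) ^ p ≤ (d / c) ^ (1:ℝ) :=
          Real.rpow_le_rpow_of_exponent_ge hdc0 hdc1 hp1
      _ = d / c := Real.rpow_one _
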